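/- arXiv:1602.01867 — 4 statements merged into one kernel-verified Lean document; each statement's English description precedes it below -/
import Mathlib

section
/- Let G be a finite simple graph on vertex set V, let l be a positive natural number, and let s₄ be a positive real number with s₄·l < 1. Then there exists a partition of V into four independent sets I₁, I₂, I₃, I₄ with |I₁| ≤ l, |I₂| ≤ l, |I₃| ≤ l and |I₄|/s₄ ≤ l if and only if there exists a partition of V into three independent sets each of size at most l. (This is the correctness of the reduction showing NP-hardness of scheduling unit jobs on four uniform machines with speeds 1, 1, 1, s₄ and a bipartite incompatibility graph.) -/
/-- A finset of vertices is independent: no two of its members are adjacent. -/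
def IsIndep {V : Type*} (G : SimpleGraph V) (s : Finset V) : Prop :=
  ∀ u ∈ s, ∀ v ∈ s, ¬ G.Adj u v

/-- Correctness of the NP-hardness reduction: for a finite simple graph `G`, a positive
integer `l` and a positive real `s₄` with `s₄·l < 1`, there is a partition of the vertex set
into four independent sets `I₁, I₂, I₃, I₄` with `|I₁| ≤ l`, `|I₂| ≤ l`, `|I₃| ≤ l` and
`|I₄|/s₄ ≤ l` (a schedule of length at most `l` on machines of speeds `1,1,1,s₄`) if and
only if there is a partition of the vertex set into three independent sets each of size at
most `l`. -/
theorem stmt_4 {V : Type*} [Fintype V] [DecidableEq V] (G : SimpleGraph V)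
    (l : ℕ) (hl : 0 < l) (s₄ : ℝ) (hs₄ : 0 < s₄) (hsl : s₄ * l < 1) :
    (∃ I₁ I₂ I₃ I₄ : Finset V,
      IsIndep G I₁ ∧ IsIndep G I₂ ∧ IsIndep G I₃ ∧ IsIndep G I₄ ∧
      Disjoint I₁ I₂ ∧ Disjoint I₁ I₃ ∧ Disjoint I₁ I₄ ∧
      Disjoint I₂ I₃ ∧ Disjoint I₂ I₄ ∧ Disjoint I₃ I₄ ∧
      I₁ ∪ I₂ ∪ I₃ ∪ I₄ = Finset.univ ∧
      I₁.card ≤ l ∧ I₂.card ≤ l ∧ I₃.card ≤ l ∧ (I₄.card : ℝ) / s₄ ≤ l) ↔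
    (∃ J₁ J₂ J₃ : Finset V,
      IsIndep G J₁ ∧ IsIndep G J₂ ∧ IsIndep G J₃ ∧
      Disjoint J₁ J₂ ∧ Disjoint J₁ J₃ ∧ Disjoint J₂ J₃ ∧
      J₁ ∪ J₂ ∪ J₃ = Finset.univ ∧
      J₁.card ≤ l ∧ J₂.card ≤ l ∧ J₃.card ≤ l) := by
  constructor
  · rintro ⟨I₁, I₂, I₃, I₄, h₁, h₂, h₃, h₄, d₁₂, d₁₃, d₁₄, d₂₃, d₂₄, d₃₄, hu, c₁, c₂, c₃, c₄⟩
    have hle : (I₄.card : ℝ) ≤ s₄ * l := by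
      rw [div_le_iff₀ hs₄] at c₄; linarith
    have hcard : I₄.card = 0 := by
      by_contra h
      have : (1 : ℝ) ≤ I₄.card := by exact_mod_cast Nat.one_le_iff_ne_zero.mpr h
      linarith
    have hI₄ : I₄ = ∅ := Finset.card_eq_zero.mp hcard
    refine ⟨I₁, I₂, I₃, h₁, h₂, h₃, d₁₂, d₁₃, d₂₃, ?_, c₁, c₂, c₃⟩
    simpa [hI₄] using hu
  · rintro ⟨J₁, J₂, J₃, h₁, h₂, h₃, d₁₂, d₁₃, d₂₃, hu, c₁, c₂, c₃⟩
    refine ⟨J₁, J₂, J₃, ∅, h₁, h₂, h₃, by simp [IsIndep], d₁₂, d₁₃, by simp, d₂₃, by simp,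
      by simp, by simpa using hu, c₁, c₂, c₃, by simp⟩
end

section
/- Let G be a bipartite finite simple graph on n vertices with no isolated vertices and maximum degree Δ(G) ≤ 4, and let s, s₁ be positive real numbers with s₁ ≥ 2·s. Then max(α(G)/s₁, ⌈(n − α(G))/3⌉/s) ≤ 2·OPT, where OPT is the minimum over all partitions of the vertex set of G into four independent sets I₁, I₂, I₃, I₄ of the makespan max(|I₁|/s₁, |I₂|/s, |I₃|/s, |I₄|/s). (In other words, scheduling a maximum independent set on the fast machine and spreading the remaining jobs equitably over the three slow machines is a 2-approximation when s₁ ≥ 2s₂ and s₂ = s₃ = s₄.) -/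
/-- The independence number: the maximum size of an independent set. -/
noncomputable def alpha {V : Type*} [Fintype V] (G : SimpleGraph V) : ℕ :=
  sSup {n | ∃ s : Finset V, IsIndep G s ∧ s.card = n}

/-- For a bipartite finite simple graph `G` on `n` vertices with no isolated vertices and
maximum degree at most 4, and speeds `s₁ ≥ 2·s` with `s, s₁ > 0`, the schedule that puts a
maximum independent set on the fast machine and spreads the remaining jobs equitably over
the three slow machines has makespan `max(α(G)/s₁, ⌈(n − α(G))/3⌉/s)` at most twice the
optimal makespan: it is at most `2 ·` the makespan of every partition of the vertex set into
four independent sets. -/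
theorem stmt_7 {V : Type*} [Fintype V] [DecidableEq V] (G : SimpleGraph V)
    [DecidableRel G.Adj] (hbip : G.Colorable 2)
    (hiso : ∀ v : V, ∃ w : V, G.Adj v w) (hΔ : G.maxDegree ≤ 4)
    (s s₁ : ℝ) (hs : 0 < s) (hs₁ : 0 < s₁) (hfast : 2 * s ≤ s₁) :
    ∀ I₁ I₂ I₃ I₄ : Finset V,
      IsIndep G I₁ → IsIndep G I₂ → IsIndep G I₃ → IsIndep G I₄ →
      Disjoint I₁ I₂ → Disjoint I₁ I₃ → Disjoint I₁ I₄ →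
      Disjoint I₂ I₃ → Disjoint I₂ I₄ → Disjoint I₃ I₄ →
      I₁ ∪ I₂ ∪ I₃ ∪ I₄ = Finset.univ →
      max ((alpha G : ℝ) / s₁) ((⌈((Fintype.card V - alpha G : ℕ) : ℚ) / 3⌉ : ℝ) / s) ≤
        2 * max (max ((I₁.card : ℝ) / s₁) ((I₂.card : ℝ) / s))
                (max ((I₃.card : ℝ) / s) ((I₄.card : ℝ) / s)) := by
  classical
  intro I₁ I₂ I₃ I₄ h1 h2 h3 h4 _ _ _ _ _ _ huniv
  set M : ℝ := max (max ((I₁.card : ℝ) / s₁) ((I₂.card : ℝ) / s))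
                (max ((I₃.card : ℝ) / s) ((I₄.card : ℝ) / s)) with hMdef
  have hMa : (I₁.card : ℝ) / s₁ ≤ M := le_trans (le_max_left _ _) (le_max_left _ _)
  have hMb : (I₂.card : ℝ) / s ≤ M := le_trans (le_max_right _ _) (le_max_left _ _)
  have hMc : (I₃.card : ℝ) / s ≤ M := le_trans (le_max_left _ _) (le_max_right _ _)
  have hMd : (I₄.card : ℝ) / s ≤ M := le_trans (le_max_right _ _) (le_max_right _ _)
  have hM0 : 0 ≤ M := le_trans (by positivity) hMa
  have ha : (I₁.card : ℝ) ≤ M * s₁ := (div_le_iff₀ hs₁).mp hMa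
  have hb : (I₂.card : ℝ) ≤ M * s := (div_le_iff₀ hs).mp hMb
  have hc : (I₃.card : ℝ) ≤ M * s := (div_le_iff₀ hs).mp hMc
  have hd : (I₄.card : ℝ) ≤ M * s := (div_le_iff₀ hs).mp hMd
  -- alpha basics
  have hbdd : BddAbove {m | ∃ t : Finset V, IsIndep G t ∧ t.card = m} := by
    refine ⟨Fintype.card V, ?_⟩
    rintro m ⟨t, _, rfl⟩
    exact Finset.card_le_univ t |>.trans_eq Finset.card_univ
  have hne : {m | ∃ t : Finset V, IsIndep G t ∧ t.card = m}.Nonempty :=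
    ⟨0, ∅, fun u hu => absurd hu (by simp), rfl⟩
  have hle : ∀ t : Finset V, IsIndep G t → t.card ≤ alpha G := fun t ht =>
    le_csSup hbdd ⟨t, ht, rfl⟩
  obtain ⟨S, hS, hScard⟩ : ∃ S : Finset V, IsIndep G S ∧ S.card = alpha G :=
    Nat.sSup_mem hne hbdd
  -- the 5α ≤ 4n bound
  have hf : ∀ v, G.Adj v (Classical.choose (hiso v)) := fun v => Classical.choose_spec (hiso v)
  set f : V → V := fun v => Classical.choose (hiso v) with hfdef
  have hfadj : ∀ v, G.Adj v (f v) := hf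
  have hmap : ∀ v ∈ S, f v ∈ Finset.univ \ S := by
    intro v hv
    simp only [Finset.mem_sdiff, Finset.mem_univ, true_and]
    intro hfv
    exact hS v hv (f v) hfv (hfadj v)
  have key : S.card ≤ 4 * (Finset.univ \ S).card := by
    rw [Finset.card_eq_sum_card_fiberwise hmap]
    calc ∑ w ∈ Finset.univ \ S, (S.filter (fun v => f v = w)).card
        ≤ ∑ _w ∈ Finset.univ \ S, 4 := by
          apply Finset.sum_le_sum
          intro w _
          have hsub : S.filter (fun v => f v = w) ⊆ G.neighborFinset w := by
            intro v hv
            simp only [Finset.mem_filter] at hv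
            rw [SimpleGraph.mem_neighborFinset]
            have hadj : G.Adj v (f v) := hfadj v
            rw [hv.2] at hadj
            exact hadj.symm
          calc (S.filter (fun v => f v = w)).card
              ≤ (G.neighborFinset w).card := Finset.card_le_card hsub
            _ = G.degree w := G.card_neighborFinset_eq_degree w
            _ ≤ G.maxDegree := G.degree_le_maxDegree w
            _ ≤ 4 := hΔ
      _ = 4 * (Finset.univ \ S).card := by
          rw [Finset.sum_const, smul_eq_mul, mul_comm]
  have hcompl : (Finset.univ \ S).card = Fintype.card V - S.card := by
    rw [Finset.card_sdiff_of_subset (Finset.subset_univ S), Finset.card_univ]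
  have hSle : S.card ≤ Fintype.card V := Finset.card_le_univ S |>.trans_eq Finset.card_univ
  have h5 : 5 * alpha G ≤ 4 * Fintype.card V := by
    rw [hcompl, hScard] at key
    rw [hScard] at hSle
    omega
  have hn : Fintype.card V ≤ I₁.card + I₂.card + I₃.card + I₄.card := by
    calc Fintype.card V = (I₁ ∪ I₂ ∪ I₃ ∪ I₄).card := by rw [huniv, Finset.card_univ]
      _ ≤ (I₁ ∪ I₂ ∪ I₃).card + I₄.card := Finset.card_union_le _ _
      _ ≤ (I₁ ∪ I₂).card + I₃.card + I₄.card :=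
          Nat.add_le_add_right (Finset.card_union_le _ _) _
      _ ≤ I₁.card + I₂.card + I₃.card + I₄.card :=
          Nat.add_le_add_right (Nat.add_le_add_right (Finset.card_union_le _ _) _) _
  apply max_le
  · -- α/s₁ ≤ 2M
    rw [div_le_iff₀ hs₁]
    have h4n : (5:ℝ) * (alpha G : ℝ) ≤ 4 * (Fintype.card V : ℝ) := by exact_mod_cast h5
    have hnr : (Fintype.card V : ℝ) ≤
        (I₁.card : ℝ) + I₂.card + I₃.card + I₄.card := by exact_mod_cast hn
    nlinarith [mul_nonneg hM0 (by linarith : (0:ℝ) ≤ s₁ - 2*s)]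
  · -- ceiling term
    have ha1 : I₁.card ≤ alpha G := hle I₁ h1
    have hk : Fintype.card V - alpha G ≤ I₂.card + I₃.card + I₄.card := by omega
    set m : ℕ := max I₂.card (max I₃.card I₄.card) with hm
    have hm2 : I₂.card ≤ m := le_max_left _ _
    have hm3 : I₃.card ≤ m := le_trans (le_max_left _ _) (le_max_right _ _)
    have hm4 : I₄.card ≤ m := le_trans (le_max_right _ _) (le_max_right _ _)
    have hk3 : Fintype.card V - alpha G ≤ 3 * m := by omega
    have hceil : ⌈((Fintype.card V - alpha G : ℕ) : ℚ) / 3⌉ ≤ (m : ℤ) := by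
      rw [Int.ceil_le]
      rw [div_le_iff₀ (by norm_num : (0:ℚ) < 3)]
      have : ((Fintype.card V - alpha G : ℕ) : ℚ) ≤ 3 * (m : ℚ) := by exact_mod_cast hk3
      push_cast
      linarith
    have hms : (m : ℝ) ≤ M * s := by
      rcases max_choice I₂.card (max I₃.card I₄.card) with h | h
      · rw [hm, h]; exact hb
      · rw [hm, h]
        rcases max_choice I₃.card I₄.card with h' | h'
        · rw [h']; exact hc
        · rw [h']; exact hd
    rw [div_le_iff₀ hs]
    have hcr : ((⌈((Fintype.card V - alpha G : ℕ) : ℚ) / 3⌉ : ℤ) : ℝ) ≤ (m : ℝ) := by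
      exact_mod_cast hceil
    nlinarith
end

section
/- Let G be a bipartite finite simple graph on n vertices with maximum degree Δ(G) ≤ 4, and let the machine speeds be s₁ = s₂ = 3s and s₃ = s₄ = s for some real s > 0. Let (A, B, C, D) be a partition of the vertex set of G into four independent sets whose sizes pairwise differ by at most 1, ordered so that |A| ≥ |B| ≥ |C| ≥ |D|. Then max(|A|/s₁, |B|/s₂, |C|/s₃, |D|/s₄) ≤ 2·OPT, where OPT is the minimum over all partitions of the vertex set of G into four independent sets J₁, J₂, J₃, J₄ of the makespan max(|J₁|/s₁, |J₂|/s₂, |J₃|/s₃, |J₄|/s₄). -/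
/-- Accuracy of Algorithm 3: for a bipartite finite simple graph `G` with maximum degree at
most 4 and machine speeds `s₁ = s₂ = 3s`, `s₃ = s₄ = s` (`s > 0`), every equitable
4-coloring `(A, B, C, D)` of `G` with `|A| ≥ |B| ≥ |C| ≥ |D|` yields a makespan at most
twice the makespan of every partition of the vertex set into four independent sets. -/
theorem stmt_11 {V : Type*} [Fintype V] [DecidableEq V] (G : SimpleGraph V)
    [DecidableRel G.Adj] (hbip : G.Colorable 2) (hΔ : G.maxDegree ≤ 4)
    (s : ℝ) (hs : 0 < s)
    (A B C D : Finset V)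
    (hA : IsIndep G A) (hB : IsIndep G B) (hC : IsIndep G C) (hD : IsIndep G D)
    (hAB : Disjoint A B) (hAC : Disjoint A C) (hAD : Disjoint A D)
    (hBC : Disjoint B C) (hBD : Disjoint B D) (hCD : Disjoint C D)
    (hcover : A ∪ B ∪ C ∪ D = Finset.univ)
    (hord : D.card ≤ C.card ∧ C.card ≤ B.card ∧ B.card ≤ A.card)
    (heq : (A.card : ℤ) - D.card ≤ 1) :
    ∀ J₁ J₂ J₃ J₄ : Finset V,
      IsIndep G J₁ → IsIndep G J₂ → IsIndep G J₃ → IsIndep G J₄ →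
      Disjoint J₁ J₂ → Disjoint J₁ J₃ → Disjoint J₁ J₄ →
      Disjoint J₂ J₃ → Disjoint J₂ J₄ → Disjoint J₃ J₄ →
      J₁ ∪ J₂ ∪ J₃ ∪ J₄ = Finset.univ →
      max (max ((A.card : ℝ) / (3 * s)) ((B.card : ℝ) / (3 * s)))
          (max ((C.card : ℝ) / s) ((D.card : ℝ) / s)) ≤
        2 * max (max ((J₁.card : ℝ) / (3 * s)) ((J₂.card : ℝ) / (3 * s)))
                (max ((J₃.card : ℝ) / s) ((J₄.card : ℝ) / s)) := by
  intro J₁ J₂ J₃ J₄ _ _ _ _ hJ12 hJ13 hJ14 hJ23 hJ24 hJ34 hJcover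
  obtain ⟨hDC, hCB, hBA⟩ := hord
  set T : ℝ := max (max ((J₁.card : ℝ) / (3 * s)) ((J₂.card : ℝ) / (3 * s)))
      (max ((J₃.card : ℝ) / s) ((J₄.card : ℝ) / s)) with hT
  have h3s : (0:ℝ) < 3 * s := by linarith
  -- card sums
  have hn1 : A.card + B.card + C.card + D.card = Fintype.card V := by
    have : (A ∪ B ∪ C ∪ D).card = A.card + B.card + C.card + D.card := by
      rw [Finset.card_union_of_disjoint (by simp [Finset.disjoint_union_left, hAD, hBD, hCD]),
          Finset.card_union_of_disjoint (by simp [Finset.disjoint_union_left, hAC, hBC]),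
          Finset.card_union_of_disjoint hAB]
    rw [hcover, Finset.card_univ] at this
    omega
  have hn2 : J₁.card + J₂.card + J₃.card + J₄.card = Fintype.card V := by
    have : (J₁ ∪ J₂ ∪ J₃ ∪ J₄).card = J₁.card + J₂.card + J₃.card + J₄.card := by
      rw [Finset.card_union_of_disjoint (by simp [Finset.disjoint_union_left, hJ14, hJ24, hJ34]),
          Finset.card_union_of_disjoint (by simp [Finset.disjoint_union_left, hJ13, hJ23]),
          Finset.card_union_of_disjoint hJ12]
    rw [hJcover, Finset.card_univ] at this
    omega
  -- bounds on the J's from the makespan T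
  have hJ1T : (J₁.card : ℝ) ≤ 3 * s * T := by
    have h := le_max_left (max ((J₁.card : ℝ) / (3 * s)) ((J₂.card : ℝ) / (3 * s)))
      (max ((J₃.card : ℝ) / s) ((J₄.card : ℝ) / s))
    have h1 := le_trans (le_max_left ((J₁.card : ℝ) / (3 * s)) ((J₂.card : ℝ) / (3 * s))) h
    rw [div_le_iff₀ h3s] at h1; linarith
  have hJ2T : (J₂.card : ℝ) ≤ 3 * s * T := by
    have h := le_max_left (max ((J₁.card : ℝ) / (3 * s)) ((J₂.card : ℝ) / (3 * s)))
      (max ((J₃.card : ℝ) / s) ((J₄.card : ℝ) / s))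
    have h1 := le_trans (le_max_right ((J₁.card : ℝ) / (3 * s)) ((J₂.card : ℝ) / (3 * s))) h
    rw [div_le_iff₀ h3s] at h1; linarith
  have hJ3T : (J₃.card : ℝ) ≤ s * T := by
    have h := le_max_right (max ((J₁.card : ℝ) / (3 * s)) ((J₂.card : ℝ) / (3 * s)))
      (max ((J₃.card : ℝ) / s) ((J₄.card : ℝ) / s))
    have h1 := le_trans (le_max_left ((J₃.card : ℝ) / s) ((J₄.card : ℝ) / s)) h
    rw [div_le_iff₀ hs] at h1; linarith
  have hJ4T : (J₄.card : ℝ) ≤ s * T := by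
    have h := le_max_right (max ((J₁.card : ℝ) / (3 * s)) ((J₂.card : ℝ) / (3 * s)))
      (max ((J₃.card : ℝ) / s) ((J₄.card : ℝ) / s))
    have h1 := le_trans (le_max_right ((J₃.card : ℝ) / s) ((J₄.card : ℝ) / s)) h
    rw [div_le_iff₀ hs] at h1; linarith
  -- Claim 1 : |A| ≤ 6 s T
  have hA6 : (A.card : ℝ) ≤ 6 * s * T := by
    by_contra hc
    push_neg at hc
    have h1 : (2 * J₁.card : ℝ) < A.card := by linarith
    have h2 : (2 * J₂.card : ℝ) < A.card := by linarith
    have h3 : (6 * J₃.card : ℝ) < A.card := by linarith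
    have h4 : (6 * J₄.card : ℝ) < A.card := by linarith
    have n1 : 2 * J₁.card < A.card := by exact_mod_cast h1
    have n2 : 2 * J₂.card < A.card := by exact_mod_cast h2
    have n3 : 6 * J₃.card < A.card := by exact_mod_cast h3
    have n4 : 6 * J₄.card < A.card := by exact_mod_cast h4
    omega
  -- Claim 2 : |C| ≤ 2 s T
  have hC2 : (C.card : ℝ) ≤ 2 * s * T := by
    by_contra hc
    push_neg at hc
    have h1 : (2 * J₁.card : ℝ) < 3 * C.card := by linarith
    have h2 : (2 * J₂.card : ℝ) < 3 * C.card := by linarith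
    have h3 : (2 * J₃.card : ℝ) < C.card := by linarith
    have h4 : (2 * J₄.card : ℝ) < C.card := by linarith
    have n1 : 2 * J₁.card < 3 * C.card := by exact_mod_cast h1
    have n2 : 2 * J₂.card < 3 * C.card := by exact_mod_cast h2
    have n3 : 2 * J₃.card < C.card := by exact_mod_cast h3
    have n4 : 2 * J₄.card < C.card := by exact_mod_cast h4
    omega
  -- conclude
  have hBA' : (B.card : ℝ) ≤ A.card := by exact_mod_cast hBA
  have hDC' : (D.card : ℝ) ≤ C.card := by exact_mod_cast hDC
  apply max_le <;> apply max_le <;> rw [div_le_iff₀ (by linarith)] <;> linarith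
end

section
/- Let G be a bipartite finite simple graph with maximum degree Δ(G) ≤ 2. Then the vertex set of G can be partitioned into two independent sets whose sizes differ by at most 1 (an equitable 2-coloring). -/
namespace Stmt16

open Finset

variable {V : Type*} [DecidableEq V]

lemma fin2_iff : ∀ a b d : Fin 2, a ≠ b → (a = d ↔ ¬ b = d) := by decide

lemma fin2_tri : ∀ a b d : Fin 2, a ≠ b → a ≠ d → b ≠ d → False := by decide

lemma fin2_cross : ∀ a b x y : Fin 2, a ≠ b → x ≠ a → y ≠ b → x ≠ y := by decide

/-- restriction of `G` to a finset of vertices. -/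
def restrict (G : SimpleGraph V) (S : Finset V) : SimpleGraph V where
  Adj x y := G.Adj x y ∧ x ∈ S ∧ y ∈ S
  symm := ⟨fun x y h => ⟨h.1.symm, h.2.2, h.2.1⟩⟩
  loopless := ⟨fun x h => G.loopless.irrefl x h.1⟩

lemma indep_insert {G : SimpleGraph V} {A : Finset V} {x : V}
    (hA : IsIndep G A) (hx : ∀ a ∈ A, ¬ G.Adj x a) : IsIndep G (insert x A) := by
  intro a ha b hb hadj
  rcases Finset.mem_insert.1 ha with rfl | h1 <;> rcases Finset.mem_insert.1 hb with rfl | h2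
  · exact G.loopless.irrefl _ hadj
  · exact hx b h2 hadj
  · exact hx a h1 hadj.symm
  · exact hA a h1 b h2 hadj

lemma walk_opp {G : SimpleGraph V} (c : G.Coloring (Fin 2)) {A B S' : Finset V}
    (hA : IsIndep G A) (hB : IsIndep G B) (hU : A ∪ B = S') :
    ∀ {x y : V}, (restrict G S').Reachable x y → ((x ∈ A ↔ y ∈ A) ↔ c x = c y) := by
  intro x y hr
  obtain ⟨w⟩ := hr
  induction w with
  | nil => simp
  | @cons x z y h p ih =>
    obtain ⟨hadj, hx, hz⟩ : G.Adj x z ∧ x ∈ S' ∧ z ∈ S' := h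
    have hcol : c x ≠ c z := c.valid hadj
    have hxAB : x ∈ A ∨ x ∈ B := by
      rw [← Finset.mem_union, hU]; exact hx
    have hzAB : z ∈ A ∨ z ∈ B := by
      rw [← Finset.mem_union, hU]; exact hz
    have hmem : x ∈ A ↔ ¬ z ∈ A := by
      constructor
      · intro hxA hzA; exact hA x hxA z hzA hadj
      · intro hzA
        rcases hxAB with h' | h'
        · exact h'
        · rcases hzAB with h'' | h''
          · exact absurd h'' hzA
          · exact absurd hadj (hB x h' z h'')
    have hiff : c x = c y ↔ ¬ c z = c y := fin2_iff _ _ _ hcol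
    tauto


lemma extend2 {G : SimpleGraph V} {A B S : Finset V} {x y : V}
    (hA : IsIndep G A) (hB : IsIndep G B) (hd : Disjoint A B) (hU : A ∪ B = S \ {x, y})
    (hcard : |(A.card : ℤ) - B.card| ≤ 1)
    (hx : x ∈ S) (hy : y ∈ S) (hxy : x ≠ y)
    (hxA : ∀ a ∈ A, ¬ G.Adj x a) (hyB : ∀ b ∈ B, ¬ G.Adj y b) :
    ∃ A' B' : Finset V, IsIndep G A' ∧ IsIndep G B' ∧ Disjoint A' B' ∧ A' ∪ B' = S ∧
      |(A'.card : ℤ) - B'.card| ≤ 1 := by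
  have hxAB : x ∉ A ∪ B := by rw [hU]; simp
  have hyAB : y ∉ A ∪ B := by rw [hU]; simp
  have hxA' : x ∉ A := fun h => hxAB (Finset.mem_union_left _ h)
  have hxB' : x ∉ B := fun h => hxAB (Finset.mem_union_right _ h)
  have hyA' : y ∉ A := fun h => hyAB (Finset.mem_union_left _ h)
  have hyB' : y ∉ B := fun h => hyAB (Finset.mem_union_right _ h)
  refine ⟨insert x A, insert y B, indep_insert hA hxA, indep_insert hB hyB, ?_, ?_, ?_⟩
  · rw [Finset.disjoint_insert_left, Finset.disjoint_insert_right]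
    exact ⟨by simp [hxy, hxB'], hyA', hd⟩
  · have h1 : insert x A ∪ insert y B = insert x (insert y (A ∪ B)) := by
      ext z; simp; tauto
    rw [h1, hU]
    ext z
    simp only [Finset.mem_insert, Finset.mem_sdiff, Finset.mem_singleton]
    constructor
    · rintro (rfl | rfl | ⟨h, _⟩) <;> first | exact hx | exact hy | exact h
    · intro hz
      by_cases h1 : z = x
      · exact Or.inl h1
      by_cases h2 : z = y
      · exact Or.inr (Or.inl h2)
      · exact Or.inr (Or.inr ⟨hz, by simp [h1, h2]⟩)
  · rw [Finset.card_insert_of_notMem hxA', Finset.card_insert_of_notMem hyB']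
    rw [abs_le] at hcard ⊢
    push_cast
    omega

lemma extend1 {G : SimpleGraph V} {A B S : Finset V} {v : V}
    (hA : IsIndep G A) (hB : IsIndep G B) (hd : Disjoint A B) (hU : A ∪ B = S.erase v)
    (hcard : |(A.card : ℤ) - B.card| ≤ 1) (hv : v ∈ S)
    (hvAB : ∀ a ∈ A ∪ B, ¬ G.Adj v a) :
    ∃ A' B' : Finset V, IsIndep G A' ∧ IsIndep G B' ∧ Disjoint A' B' ∧ A' ∪ B' = S ∧
      |(A'.card : ℤ) - B'.card| ≤ 1 := by
  have hvAB' : v ∉ A ∪ B := by rw [hU]; simp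
  have hvA : v ∉ A := fun h => hvAB' (Finset.mem_union_left _ h)
  have hvB : v ∉ B := fun h => hvAB' (Finset.mem_union_right _ h)
  rcases le_total A.card B.card with h | h
  · refine ⟨insert v A, B, indep_insert hA (fun a ha => hvAB a (Finset.mem_union_left _ ha)),
      hB, ?_, ?_, ?_⟩
    · rw [Finset.disjoint_insert_left]; exact ⟨hvB, hd⟩
    · rw [Finset.insert_union, hU, Finset.insert_erase hv]
    · rw [Finset.card_insert_of_notMem hvA]
      rw [abs_le] at hcard ⊢
      push_cast
      omega
  · refine ⟨A, insert v B, hA,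
      indep_insert hB (fun a ha => hvAB a (Finset.mem_union_right _ ha)), ?_, ?_, ?_⟩
    · rw [Finset.disjoint_insert_right]; exact ⟨hvA, hd⟩
    · rw [Finset.union_insert, hU, Finset.insert_erase hv]
    · rw [Finset.card_insert_of_notMem hvB]
      rw [abs_le] at hcard ⊢
      push_cast
      omega


lemma key_parity [Fintype V] (G : SimpleGraph V) [DecidableRel G.Adj]
    {S : Finset V} (hS2 : ∀ x ∈ S, (G.neighborFinset x ∩ S).card = 2)
    {u v u' v' : V} (huS : u ∈ S) (hvS : v ∈ S) (huv : G.Adj u v)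
    (hNu : G.neighborFinset u ∩ S = {v, u'}) (hNv : G.neighborFinset v ∩ S = {u, v'})
    (hu'v : u' ≠ v) (hv'u : v' ≠ u) :
    (restrict G (S \ {u, v})).Reachable u' v' := by
  classical
  have huvne : u ≠ v := huv.ne
  have hu'mem : u' ∈ G.neighborFinset u ∩ S := by rw [hNu]; simp
  have hv'mem : v' ∈ G.neighborFinset v ∩ S := by rw [hNv]; simp
  have hAdjuu' : G.Adj u u' := by
    have := Finset.mem_inter.1 hu'mem |>.1
    rwa [SimpleGraph.mem_neighborFinset] at this
  have hAdjvv' : G.Adj v v' := by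
    have := Finset.mem_inter.1 hv'mem |>.1
    rwa [SimpleGraph.mem_neighborFinset] at this
  have hu'S : u' ∈ S := (Finset.mem_inter.1 hu'mem).2
  have hv'S : v' ∈ S := (Finset.mem_inter.1 hv'mem).2
  set S' := S \ ({u, v} : Finset V) with hS'
  have hS'sub : S' ⊆ S := Finset.sdiff_subset
  have hu'S' : u' ∈ S' := by
    rw [hS', Finset.mem_sdiff]
    exact ⟨hu'S, by simp [hAdjuu'.ne', hu'v]⟩
  have hv'S' : v' ∈ S' := by
    rw [hS', Finset.mem_sdiff]
    exact ⟨hv'S, by simp [hAdjvv'.ne', hv'u]⟩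
  set C := S'.filter (fun x => (restrict G S').Reachable u' x) with hC
  have hCs : C ⊆ S' := Finset.filter_subset _ _
  have hu'C : u' ∈ C := Finset.mem_filter.2 ⟨hu'S', SimpleGraph.Reachable.refl _⟩
  have hclose : ∀ x ∈ C, ∀ y, G.Adj x y → y ∈ S' → y ∈ C := by
    intro x hx y hxy hy
    obtain ⟨hxS', hreach⟩ := Finset.mem_filter.1 hx
    exact Finset.mem_filter.2
      ⟨hy, hreach.trans (SimpleGraph.Adj.reachable (show G.Adj x y ∧ x ∈ S' ∧ y ∈ S' from ⟨hxy, hxS', hy⟩))⟩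
  have huC : u ∉ C := fun h => by
    have := hCs h; rw [hS', Finset.mem_sdiff] at this; simp at this
  have hvC : v ∉ C := fun h => by
    have := hCs h; rw [hS', Finset.mem_sdiff] at this; simp at this
  -- degree decomposition
  have hdecomp : ∀ x ∈ C, (G.neighborFinset x ∩ C).card
      + (G.neighborFinset x ∩ {u, v}).card = 2 := by
    intro x hx
    have hxS : x ∈ S := hS'sub (hCs hx)
    rw [← hS2 x hxS]
    have hdisj : Disjoint (G.neighborFinset x ∩ C) (G.neighborFinset x ∩ ({u, v} : Finset V)) := by
      apply Finset.disjoint_left.2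
      intro y hy1 hy2
      have hyC := (Finset.mem_inter.1 hy1).2
      have hyuv := (Finset.mem_inter.1 hy2).2
      rcases Finset.mem_insert.1 hyuv with rfl | h
      · exact huC hyC
      · rw [Finset.mem_singleton] at h; subst h; exact hvC hyC
    rw [← Finset.card_union_of_disjoint hdisj]
    congr 1
    ext y
    simp only [Finset.mem_union, Finset.mem_inter, SimpleGraph.mem_neighborFinset]
    constructor
    · rintro (⟨h1, h2⟩ | ⟨h1, h2⟩)
      · exact ⟨h1, hS'sub (hCs h2)⟩
      · refine ⟨h1, ?_⟩
        rcases Finset.mem_insert.1 h2 with rfl | h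
        · exact huS
        · rw [Finset.mem_singleton] at h; subst h; exact hvS
    · rintro ⟨h1, h2⟩
      by_cases hy : y ∈ ({u, v} : Finset V)
      · exact Or.inr ⟨h1, hy⟩
      · refine Or.inl ⟨h1, hclose x hx y h1 ?_⟩
        rw [hS', Finset.mem_sdiff]; exact ⟨h2, hy⟩
  -- total sum
  have hsum : (∑ x ∈ C, (G.neighborFinset x ∩ C).card)
      + (∑ x ∈ C, (G.neighborFinset x ∩ ({u, v} : Finset V)).card) = 2 * C.card := by
    rw [← Finset.sum_add_distrib, Finset.sum_congr rfl hdecomp]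
    simp [mul_comm]
  -- first sum is even
  have hTeven : (∑ x ∈ C, (G.neighborFinset x ∩ C).card) % 2 = 0 := by
    have h1 : ∀ x ∈ C, (G.neighborFinset x ∩ C).card
        = ∑ y ∈ C, if G.Adj x y then 1 else 0 := by
      intro x _
      rw [← Finset.card_filter]
      congr 1
      ext y
      simp [SimpleGraph.mem_neighborFinset, and_comm]
    rw [Finset.sum_congr rfl h1, ← Finset.sum_product']
    have hcardP : (∑ p ∈ C ×ˢ C, if G.Adj p.1 p.2 then 1 else 0)
        = ((C ×ˢ C).filter (fun p => G.Adj p.1 p.2)).card := by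
      rw [Finset.card_filter]
    rw [hcardP, ← Nat.even_iff]
    set P := (C ×ˢ C).filter (fun p => G.Adj p.1 p.2) with hP
    suffices h : (P.card : ZMod 2) = 0 by
      rw [ZMod.natCast_eq_zero_iff] at h
      rw [Nat.even_iff]
      omega
    have hinv : ∑ _p ∈ P, (1 : ZMod 2) = 0 := by
      refine Finset.sum_involution (fun p _ => p.swap) ?_ ?_ ?_ ?_
      · intro p _; decide
      · intro p hp _
        have : G.Adj p.1 p.2 := (Finset.mem_filter.1 hp).2
        intro heq
        exact this.ne (congrArg Prod.snd heq ▸ rfl)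
      · intro p hp
        obtain ⟨hmem, hadj⟩ := Finset.mem_filter.1 hp
        rw [Finset.mem_product] at hmem
        exact Finset.mem_filter.2 ⟨Finset.mem_product.2 ⟨hmem.2, hmem.1⟩, hadj.symm⟩
      · intro p _; exact Prod.swap_swap p
    rwa [Finset.sum_const, nsmul_eq_mul, mul_one] at hinv
  -- second sum
  have h2 : ∀ x ∈ C, (G.neighborFinset x ∩ ({u, v} : Finset V)).card
      = (if G.Adj x u then 1 else 0) + (if G.Adj x v then 1 else 0) := by
    intro x _
    have : G.neighborFinset x ∩ ({u, v} : Finset V)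
        = ({u, v} : Finset V).filter (fun y => G.Adj x y) := by
      ext y
      simp [SimpleGraph.mem_neighborFinset, and_comm]
    rw [this, Finset.card_filter, Finset.sum_pair huvne]
  have hfu : C.filter (fun x => G.Adj x u) = {u'} := by
    ext x
    simp only [Finset.mem_filter, Finset.mem_singleton]
    constructor
    · rintro ⟨hxC, hadj⟩
      have hxS' := hCs hxC
      have hxS : x ∈ S := hS'sub hxS'
      have : x ∈ G.neighborFinset u ∩ S := by
        simp [SimpleGraph.mem_neighborFinset, hadj.symm, hxS]
      rw [hNu] at this
      rcases Finset.mem_insert.1 this with rfl | h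
      · exfalso; exact hvC hxC
      · exact Finset.mem_singleton.1 h
    · rintro rfl
      exact ⟨hu'C, hAdjuu'.symm⟩
  have hv'C : v' ∈ C := by
    by_contra hv'C
    have hfv : C.filter (fun x => G.Adj x v) = ∅ := by
      ext x
      simp only [Finset.mem_filter, Finset.notMem_empty, iff_false, not_and]
      intro hxC hadj
      have hxS : x ∈ S := hS'sub (hCs hxC)
      have : x ∈ G.neighborFinset v ∩ S := by
        simp [SimpleGraph.mem_neighborFinset, hadj.symm, hxS]
      rw [hNv] at this
      rcases Finset.mem_insert.1 this with rfl | h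
      · exact huC hxC
      · rw [Finset.mem_singleton] at h; subst h; exact hv'C hxC
    have hT2 : (∑ x ∈ C, (G.neighborFinset x ∩ ({u, v} : Finset V)).card) = 1 := by
      rw [Finset.sum_congr rfl h2, Finset.sum_add_distrib,
        ← Finset.card_filter, ← Finset.card_filter, hfu, hfv]
      simp
    omega
  exact (Finset.mem_filter.1 hv'C).2


lemma main [Fintype V] (G : SimpleGraph V) [DecidableRel G.Adj] (c : G.Coloring (Fin 2))
    (hdeg : ∀ x : V, G.degree x ≤ 2) (S : Finset V) :
    ∃ A B : Finset V, IsIndep G A ∧ IsIndep G B ∧ Disjoint A B ∧ A ∪ B = S ∧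
      |(A.card : ℤ) - B.card| ≤ 1 := by
  induction S using Finset.strongInductionOn with
  | _ S ih =>
  rcases S.eq_empty_or_nonempty with rfl | hSne
  · exact ⟨∅, ∅, by simp [IsIndep], by simp [IsIndep], by simp, by simp, by simp⟩
  classical
  have hdegS : ∀ x : V, (G.neighborFinset x ∩ S).card ≤ 2 :=
    fun x => le_trans (Finset.card_le_card Finset.inter_subset_left) (hdeg x)
  by_cases hex : ∃ w ∈ S, (G.neighborFinset w ∩ S).card ≤ 1
  · obtain ⟨w, hwS, hw1⟩ := hex
    interval_cases h : (G.neighborFinset w ∩ S).card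
    · -- degree 0 in S
      have hNw : G.neighborFinset w ∩ S = ∅ := Finset.card_eq_zero.1 h
      obtain ⟨A, B, hA, hB, hd, hU, hc⟩ :=
        ih (S.erase w) (Finset.erase_ssubset hwS)
      refine extend1 hA hB hd hU hc hwS ?_
      intro a ha hadj
      have haS : a ∈ S := by
        have := hU ▸ ha
        exact Finset.mem_of_mem_erase this
      have : a ∈ G.neighborFinset w ∩ S := by
        simp [SimpleGraph.mem_neighborFinset, hadj, haS]
      rw [hNw] at this
      exact absurd this (Finset.notMem_empty a)
    · -- degree 1 in S
      obtain ⟨z, hz⟩ := Finset.card_eq_one.1 h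
      have hzmem : z ∈ G.neighborFinset w ∩ S := by rw [hz]; simp
      have hAdjwz : G.Adj w z := by
        have := (Finset.mem_inter.1 hzmem).1
        rwa [SimpleGraph.mem_neighborFinset] at this
      have hzS : z ∈ S := (Finset.mem_inter.1 hzmem).2
      have hwz : w ≠ z := hAdjwz.ne
      have hssub : S \ ({w, z} : Finset V) ⊂ S := by
        refine Finset.ssubset_iff_of_subset Finset.sdiff_subset |>.2 ⟨w, hwS, ?_⟩
        simp
      obtain ⟨A, B, hA, hB, hd, hU, hc⟩ := ih _ hssub
      have hsubS' : ∀ a, a ∈ A ∪ B → a ∈ S ∧ a ≠ w ∧ a ≠ z := by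
        intro a ha
        rw [hU, Finset.mem_sdiff] at ha
        refine ⟨ha.1, ?_, ?_⟩ <;> intro hh <;> subst hh <;> simp at ha
      -- w's only possible neighbor in A ∪ B
      have hz1 : (G.neighborFinset z ∩ (S \ ({w, z} : Finset V))).card ≤ 1 := by
        have hsub : G.neighborFinset z ∩ (S \ ({w, z} : Finset V))
            ⊆ (G.neighborFinset z ∩ S).erase w := by
          intro y hy
          rw [Finset.mem_inter, Finset.mem_sdiff] at hy
          rw [Finset.mem_erase, Finset.mem_inter]
          refine ⟨?_, hy.1, hy.2.1⟩
          intro hh; subst hh; simp at hy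
        calc (G.neighborFinset z ∩ (S \ ({w, z} : Finset V))).card
            ≤ ((G.neighborFinset z ∩ S).erase w).card := Finset.card_le_card hsub
          _ = (G.neighborFinset z ∩ S).card - 1 := by
              rw [Finset.card_erase_of_mem]
              rw [Finset.mem_inter, SimpleGraph.mem_neighborFinset]
              exact ⟨hAdjwz.symm, hwS⟩
          _ ≤ 1 := by have := hdegS z; omega
      have hwA : ∀ a ∈ A ∪ B, ¬ G.Adj w a := by
        intro a ha hadj
        obtain ⟨haS, _, haz⟩ := hsubS' a ha
        have : a ∈ G.neighborFinset w ∩ S := by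
          simp [SimpleGraph.mem_neighborFinset, hadj, haS]
        rw [hz] at this
        exact haz (Finset.mem_singleton.1 this)
      by_cases hza : ∃ a ∈ A, G.Adj z a
      · obtain ⟨a₀, ha₀A, ha₀⟩ := hza
        have hzB : ∀ b ∈ B, ¬ G.Adj z b := by
          intro b hbB hadjb
          have ha₀m : a₀ ∈ G.neighborFinset z ∩ (S \ ({w, z} : Finset V)) := by
            rw [Finset.mem_inter, SimpleGraph.mem_neighborFinset]
            exact ⟨ha₀, hU ▸ Finset.mem_union_left _ ha₀A⟩
          have hbm : b ∈ G.neighborFinset z ∩ (S \ ({w, z} : Finset V)) := by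
            rw [Finset.mem_inter, SimpleGraph.mem_neighborFinset]
            exact ⟨hadjb, hU ▸ Finset.mem_union_right _ hbB⟩
          have : a₀ = b := Finset.card_le_one.1 hz1 _ ha₀m _ hbm
          subst this
          exact Finset.disjoint_left.1 hd ha₀A hbB
        exact extend2 hA hB hd hU hc hwS hzS hwz
          (fun a ha => hwA a (Finset.mem_union_left _ ha)) hzB
      · push_neg at hza
        have hU' : A ∪ B = S \ ({z, w} : Finset V) := by
          rw [hU, Finset.pair_comm]
        exact extend2 hA hB hd hU' hc hzS hwS (Ne.symm hwz) hza
          (fun b hb => hwA b (Finset.mem_union_right _ hb))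
  · -- all degrees in S equal 2
    push_neg at hex
    have hS2 : ∀ x ∈ S, (G.neighborFinset x ∩ S).card = 2 := by
      intro x hx
      have h1 := hex x hx
      have h2 := hdegS x
      omega
    obtain ⟨u, huS⟩ := hSne
    have h2u := hS2 u huS
    have hne : (G.neighborFinset u ∩ S).Nonempty := by
      rw [← Finset.card_pos]; omega
    obtain ⟨v, hvmem⟩ := hne
    have huv : G.Adj u v := by
      have := (Finset.mem_inter.1 hvmem).1
      rwa [SimpleGraph.mem_neighborFinset] at this
    have hvS : v ∈ S := (Finset.mem_inter.1 hvmem).2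
    have h2v := hS2 v hvS
    have humem : u ∈ G.neighborFinset v ∩ S := by

      rw [Finset.mem_inter, SimpleGraph.mem_neighborFinset]
      exact ⟨huv.symm, huS⟩
    -- extract u'
    obtain ⟨u', hu'⟩ : ∃ u', (G.neighborFinset u ∩ S).erase v = {u'} := by
      apply Finset.card_eq_one.1
      rw [Finset.card_erase_of_mem hvmem, h2u]
    obtain ⟨v', hv'⟩ : ∃ v', (G.neighborFinset v ∩ S).erase u = {v'} := by
      apply Finset.card_eq_one.1
      rw [Finset.card_erase_of_mem humem, h2v]
    have hu'e : u' ∈ (G.neighborFinset u ∩ S).erase v := by rw [hu']; simp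
    have hv'e : v' ∈ (G.neighborFinset v ∩ S).erase u := by rw [hv']; simp
    have hu'v : u' ≠ v := (Finset.mem_erase.1 hu'e).1
    have hv'u : v' ≠ u := (Finset.mem_erase.1 hv'e).1
    have hNu : G.neighborFinset u ∩ S = {v, u'} := by
      rw [← Finset.insert_erase hvmem, hu']
    have hNv : G.neighborFinset v ∩ S = {u, v'} := by
      rw [← Finset.insert_erase humem, hv']
    have hAdjuu' : G.Adj u u' := by
      have := (Finset.mem_inter.1 (Finset.mem_of_mem_erase hu'e)).1
      rwa [SimpleGraph.mem_neighborFinset] at this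
    have hAdjvv' : G.Adj v v' := by
      have := (Finset.mem_inter.1 (Finset.mem_of_mem_erase hv'e)).1
      rwa [SimpleGraph.mem_neighborFinset] at this
    have hu'S : u' ∈ S := (Finset.mem_inter.1 (Finset.mem_of_mem_erase hu'e)).2
    have hv'S : v' ∈ S := (Finset.mem_inter.1 (Finset.mem_of_mem_erase hv'e)).2
    have hu'v' : u' ≠ v' := by
      intro hh
      subst hh
      exact fin2_tri (c u) (c v) (c u') (c.valid huv) (c.valid hAdjuu')
        (c.valid hAdjvv')
    have hssub : S \ ({u, v} : Finset V) ⊂ S := by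
      refine Finset.ssubset_iff_of_subset Finset.sdiff_subset |>.2 ⟨u, huS, ?_⟩
      simp
    obtain ⟨A, B, hA, hB, hd, hU, hc⟩ := ih _ hssub
    have hreach : (restrict G (S \ ({u, v} : Finset V))).Reachable u' v' :=
      key_parity G hS2 huS hvS huv hNu hNv hu'v hv'u
    have hiff := walk_opp c hA hB hU hreach
    have hcne : c u' ≠ c v' :=
      fin2_cross (c u) (c v) (c u') (c v') (c.valid huv)
        (Ne.symm (c.valid hAdjuu')) (Ne.symm (c.valid hAdjvv'))
    have hne2 : ¬ (u' ∈ A ↔ v' ∈ A) := fun hh => hcne (hiff.1 hh)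
    have hmemS' : ∀ a ∈ A ∪ B, a ∈ S ∧ a ≠ u ∧ a ≠ v := by
      intro a ha
      rw [hU, Finset.mem_sdiff] at ha
      refine ⟨ha.1, ?_, ?_⟩ <;> intro hh <;> subst hh <;> simp at ha
    have hu'AB : u' ∈ A ∪ B := by
      rw [hU, Finset.mem_sdiff]
      exact ⟨hu'S, by simp [hAdjuu'.ne', hu'v]⟩
    have hv'AB : v' ∈ A ∪ B := by
      rw [hU, Finset.mem_sdiff]
      exact ⟨hv'S, by simp [hAdjvv'.ne', hv'u]⟩
    by_cases hu'A : u' ∈ A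
    · have hv'B : v' ∈ B := by
        have hv'nA : v' ∉ A := fun hh => hne2 ⟨fun _ => hh, fun _ => hu'A⟩
        rcases Finset.mem_union.1 hv'AB with hh | hh
        · exact absurd hh hv'nA
        · exact hh
      have hvA : ∀ a ∈ A, ¬ G.Adj v a := by
        intro a haA hadj
        obtain ⟨haS, hau, -⟩ := hmemS' a (Finset.mem_union_left _ haA)
        have : a ∈ G.neighborFinset v ∩ S := by
          rw [Finset.mem_inter, SimpleGraph.mem_neighborFinset]
          exact ⟨hadj, haS⟩
        rw [hNv] at this
        rcases Finset.mem_insert.1 this with rfl | hh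
        · exact hau rfl
        · rw [Finset.mem_singleton] at hh; subst hh
          exact Finset.disjoint_left.1 hd haA hv'B
      have huB : ∀ b ∈ B, ¬ G.Adj u b := by
        intro b hbB hadj
        obtain ⟨hbS, -, hbv⟩ := hmemS' b (Finset.mem_union_right _ hbB)
        have : b ∈ G.neighborFinset u ∩ S := by
          rw [Finset.mem_inter, SimpleGraph.mem_neighborFinset]
          exact ⟨hadj, hbS⟩
        rw [hNu] at this
        rcases Finset.mem_insert.1 this with rfl | hh
        · exact hbv rfl
        · rw [Finset.mem_singleton] at hh; subst hh
          exact Finset.disjoint_left.1 hd hu'A hbB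
      have hU' : A ∪ B = S \ ({v, u} : Finset V) := by
        rw [hU, Finset.pair_comm]
      exact extend2 hA hB hd hU' hc hvS huS huv.ne' hvA huB
    · have hv'A : v' ∈ A := by
        by_contra hh
        exact hne2 ⟨fun h1 => absurd h1 hu'A, fun h1 => absurd h1 hh⟩
      have hu'B : u' ∈ B := by
        rcases Finset.mem_union.1 hu'AB with hh | hh
        · exact absurd hh hu'A
        · exact hh
      have huA : ∀ a ∈ A, ¬ G.Adj u a := by
        intro a haA hadj
        obtain ⟨haS, -, hav⟩ := hmemS' a (Finset.mem_union_left _ haA)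
        have : a ∈ G.neighborFinset u ∩ S := by
          rw [Finset.mem_inter, SimpleGraph.mem_neighborFinset]
          exact ⟨hadj, haS⟩
        rw [hNu] at this
        rcases Finset.mem_insert.1 this with rfl | hh
        · exact hav rfl
        · rw [Finset.mem_singleton] at hh; subst hh
          exact Finset.disjoint_left.1 hd haA hu'B
      have hvB : ∀ b ∈ B, ¬ G.Adj v b := by
        intro b hbB hadj
        obtain ⟨hbS, hbu, -⟩ := hmemS' b (Finset.mem_union_right _ hbB)
        have : b ∈ G.neighborFinset v ∩ S := by
          rw [Finset.mem_inter, SimpleGraph.mem_neighborFinset]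
          exact ⟨hadj, hbS⟩
        rw [hNv] at this
        rcases Finset.mem_insert.1 this with rfl | hh
        · exact hbu rfl
        · rw [Finset.mem_singleton] at hh; subst hh
          exact Finset.disjoint_left.1 hd hv'A hbB
      exact extend2 hA hB hd hU hc huS hvS huv.ne huA hvB

end Stmt16

/-- Every bipartite finite simple graph with maximum degree at most 2 admits an equitable
2-coloring: a partition of the vertex set into two independent sets whose sizes differ by
at most 1. -/
theorem stmt_16 {V : Type*} [Fintype V] [DecidableEq V] (G : SimpleGraph V)
    [DecidableRel G.Adj] (hbip : G.Colorable 2) (hΔ : G.maxDegree ≤ 2) :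
    ∃ A B : Finset V,
      IsIndep G A ∧ IsIndep G B ∧ Disjoint A B ∧ A ∪ B = Finset.univ ∧
      |(A.card : ℤ) - B.card| ≤ 1 := by
  obtain ⟨c⟩ := hbip
  have hdeg : ∀ x : V, G.degree x ≤ 2 := fun x => le_trans (G.degree_le_maxDegree x) hΔ
  exact Stmt16.main G c hdeg Finset.univ
end
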